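/- If N ≥ 6·(P+1) (equivalently, the oversampling factor γ = N/(2P) satisfies γ ≥ 3·(1 + 1/P)), then the samples of the PBL signal are uniquely identifiable up to an integer constant vector from the modulo samples. -/

import Mathlib

/-- `y : Fin N → ℝ` is a length-`N` sample vector of a periodic bandlimited signal with
`P` harmonics: `y n = ∑_{p=-P}^{P} c p · exp(2πi·n·p/N)` with `c (-p) = conj (c p)`. -/
def IsPBLSample (P N : ℕ) (y : Fin N → ℝ) : Prop :=
  ∃ c : ℤ → ℂ, (∀ p : ℤ, c (-p) = (starRingEnd ℂ) (c p)) ∧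
    ∀ n : Fin N, (y n : ℂ) =
      ∑ p ∈ Finset.Icc (-(P : ℤ)) (P : ℤ),
        c p * Complex.exp (2 * Real.pi * Complex.I * (n : ℕ) * p / N)

/-- The samples of the PBL signal are uniquely identifiable up to an integer constant
vector from the modulo samples: any two PBL sample vectors differing by an integer
vector differ by a constant integer vector. -/
def PBLIdentifiable (P N : ℕ) : Prop :=
  ∀ y y' : Fin N → ℝ, IsPBLSample P N y → IsPBLSample P N y' →
    (∀ n : Fin N, ∃ k : ℤ, y n - y' n = k) →
    ∃ c : ℤ, ∀ n : Fin N, y n - y' n = c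

noncomputable section
namespace Stmt17Aux
open Complex Finset

def e (N : ℕ) (m p : ℤ) : ℂ := Complex.exp (2 * Real.pi * Complex.I * m * p / N)

lemma e_ofReal (N : ℕ) (m p : ℤ) :
    e N m p = Complex.exp ((2 * Real.pi * m * p / N : ℝ) * Complex.I) := by
  unfold e; congr 1; push_cast; ring

lemma abs_e (N : ℕ) (m p : ℤ) : ‖e N m p‖ = 1 := by
  rw [e_ofReal]; exact Complex.norm_exp_ofReal_mul_I _

lemma e_add_one (N : ℕ) (m p : ℤ) : e N (m + 1) p = e N m p * e N 1 p := by
  unfold e; rw [← Complex.exp_add]; congr 1; push_cast; ring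

lemma exp_int2 (j p : ℤ) : Complex.exp ((j:ℂ)*(p:ℂ)*(2*Real.pi*Complex.I)) = 1 := by
  have h := Complex.exp_int_mul_two_pi_mul_I (j*p)
  push_cast at h
  convert h using 2

lemma e_period (N : ℕ) (hN : 0 < N) (m j p : ℤ) : e N (m + N * j) p = e N m p := by
  have hNC : (N : ℂ) ≠ 0 := Nat.cast_ne_zero.mpr hN.ne'
  unfold e
  have harg : (2 * (Real.pi:ℂ) * Complex.I * (((m + N*j : ℤ)):ℂ) * p / N)
      = 2 * (Real.pi:ℂ) * Complex.I * m * p / N + (j:ℂ) * (p:ℂ) * (2 * Real.pi * Complex.I) := by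
    push_cast
    field_simp
  rw [harg, Complex.exp_add, exp_int2, mul_one]

lemma e_pow (N : ℕ) (n : ℕ) (p : ℤ) : e N (n : ℤ) p = (e N 1 p) ^ n := by
  unfold e; rw [← Complex.exp_nat_mul]; congr 1; push_cast; ring

lemma e_zero (N : ℕ) (p : ℤ) : e N 0 p = 1 := by
  unfold e; simp

lemma e_N (N : ℕ) (hN : 0 < N) (p : ℤ) : e N (N : ℤ) p = 1 := by
  have h := e_period N hN 0 1 p
  simpa [e_zero] using h

lemma e_ne_one (N P : ℕ) (hPN : (P:ℤ) < N) (p : ℤ) (hp : p ≠ 0)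
    (hl : -(P:ℤ) ≤ p) (hu : p ≤ P) : e N 1 p ≠ 1 := by
  have hN0 : (0:ℤ) < N := lt_of_le_of_lt (Int.ofNat_nonneg P) hPN
  have hNC : (N : ℂ) ≠ 0 := Nat.cast_ne_zero.mpr (by exact_mod_cast hN0 : 0 < N).ne'
  intro hone
  unfold e at hone
  rw [Complex.exp_eq_one_iff] at hone
  obtain ⟨n, hn⟩ := hone
  have h2 : (2 * (Real.pi:ℂ) * Complex.I) ≠ 0 := by
    simp [Real.pi_ne_zero, Complex.I_ne_zero]
  have hpc : (p : ℂ) = n * N := by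
    have h3 : (2 * (Real.pi:ℂ) * Complex.I) * ((p:ℂ)/N) = (2 * (Real.pi:ℂ) * Complex.I) * n := by
      push_cast at hn
      linear_combination hn
    have h4 := mul_left_cancel₀ h2 h3
    field_simp at h4
    rw [h4, mul_comm]
  have hpz : p = n * N := by exact_mod_cast hpc
  have hn0 : n ≠ 0 := by rintro rfl; simp at hpz; exact hp hpz
  rcases hn0.lt_or_gt with hlt | hgt
  · have h5 : n ≤ -1 := by omega
    nlinarith
  · have h5 : 1 ≤ n := hgt
    nlinarith

lemma e_sum_zero (N P : ℕ) (hPN : (P:ℤ) < N) (p : ℤ) (hp : p ≠ 0)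
    (hl : -(P:ℤ) ≤ p) (hu : p ≤ P) : ∑ n ∈ Finset.range N, e N (n : ℤ) p = 0 := by
  have hN0 : 0 < N := by
    have : (0:ℤ) < N := lt_of_le_of_lt (Int.ofNat_nonneg P) hPN
    exact_mod_cast this
  have hne := e_ne_one N P hPN p hp hl hu
  have h1 : ∑ n ∈ Finset.range N, e N (n : ℤ) p = ∑ n ∈ Finset.range N, (e N 1 p) ^ n := by
    exact Finset.sum_congr rfl fun n _ => e_pow N n p
  rw [h1, geom_sum_eq hne, ← e_pow, e_N N hN0]
  simp

def D (N P : ℕ) (a : ℤ → ℂ) (m : ℤ) : ℂ :=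
  ∑ p ∈ Finset.Icc (-(P:ℤ)) (P:ℤ), a p * e N m p

def E (N P : ℕ) (a : ℤ → ℂ) (K : ℕ) (m : ℤ) : ℂ :=
  ∑ p ∈ Finset.Icc (-(P:ℤ)) (P:ℤ), a p * (e N 1 p - 1)^K * e N m p

lemma E_zero (N P : ℕ) (a : ℤ → ℂ) (m : ℤ) : E N P a 0 m = D N P a m := by
  unfold E D; simp

lemma E_succ (N P : ℕ) (a : ℤ → ℂ) (K : ℕ) (m : ℤ) :
    E N P a (K+1) m = E N P a K (m+1) - E N P a K m := by
  unfold E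
  rw [← Finset.sum_sub_distrib]
  refine Finset.sum_congr rfl fun p _ => ?_
  rw [e_add_one]
  ring

lemma D_period (N P : ℕ) (hN : 0 < N) (a : ℤ → ℂ) (m j : ℤ) :
    D N P a (m + N * j) = D N P a m := by
  unfold D
  exact Finset.sum_congr rfl fun p _ => by rw [e_period N hN]

lemma D_mod (N P : ℕ) (hN : 0 < N) (a : ℤ → ℂ) (m : ℤ) :
    D N P a m = D N P a (m % N) := by
  have h1 : m = m % N + N * (m / N) := by
    rw [Int.emod_add_mul_ediv m N]
  conv_lhs => rw [h1]
  exact D_period N P hN a (m % N) (m / N)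

lemma E_sum (N P : ℕ) (hPN : (P:ℤ) < N) (a : ℤ → ℂ) (K : ℕ) (hK : 1 ≤ K) :
    ∑ n ∈ Finset.range N, E N P a K (n : ℤ) = 0 := by
  unfold E
  rw [Finset.sum_comm]
  refine Finset.sum_eq_zero fun p hp => ?_
  rw [Finset.mem_Icc] at hp
  by_cases hp0 : p = 0
  · subst hp0
    have h1 : e N 1 0 = 1 := by unfold e; simp
    simp [h1, zero_pow (by omega : K ≠ 0)]
  · have h2 : ∑ n ∈ Finset.range N, a p * (e N 1 p - 1)^K * e N (n:ℤ) p
        = (a p * (e N 1 p - 1)^K) * ∑ n ∈ Finset.range N, e N (n:ℤ) p := by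
      rw [Finset.mul_sum]
    rw [h2, e_sum_zero N P hPN p hp0 hp.1 hp.2, mul_zero]

lemma abs_e_sub_one (N : ℕ) (p : ℤ) :
    ‖e N 1 p - 1‖ = Real.sqrt (2 - 2*Real.cos (2*Real.pi*p/N)) := by
  set t : ℝ := 2*Real.pi*p/N with ht
  have h1 : e N 1 p = Complex.exp ((t:ℂ) * Complex.I) := by
    rw [e_ofReal]; congr 2; rw [ht]; push_cast; ring
  rw [h1, Complex.exp_mul_I, ← Complex.ofReal_cos, ← Complex.ofReal_sin]
  have h2 : ((Real.cos t : ℂ) + (Real.sin t : ℂ) * Complex.I - 1)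
      = ((Real.cos t - 1 : ℝ) : ℂ) + ((Real.sin t : ℝ) : ℂ) * Complex.I := by
    push_cast; ring
  rw [h2, Complex.norm_add_mul_I]
  congr 1
  nlinarith [Real.sin_sq_add_cos_sq t]

lemma abs_e_sub_one_le (N P : ℕ) (hP : 1 ≤ P) (h6 : 6*(P+1) ≤ N) (p : ℤ)
    (hl : -(P:ℤ) ≤ p) (hu : p ≤ P) :
    ‖e N 1 p - 1‖ ≤ Real.sqrt (2 - 2*Real.cos (2*Real.pi*(P:ℝ)/N)) := by
  have hN0 : 0 < N := by omega
  have hNR : (0:ℝ) < N := by exact_mod_cast hN0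
  have hpi := Real.pi_pos
  have habsp : |(p:ℝ)| ≤ (P:ℝ) := by
    rw [← Int.cast_abs]
    exact_mod_cast abs_le.mpr ⟨hl, hu⟩
  have hxy : |2*Real.pi*(p:ℝ)/N| ≤ 2*Real.pi*(P:ℝ)/N := by
    rw [abs_div, abs_mul, abs_mul, _root_.abs_of_nonneg (by norm_num : (0:ℝ) ≤ 2), _root_.abs_of_pos Real.pi_pos, _root_.abs_of_nonneg hNR.le]
    gcongr
  have hyp : 2*Real.pi*(P:ℝ)/N ≤ Real.pi := by
    rw [div_le_iff₀ hNR]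
    have : (2*P : ℝ) ≤ N := by
      have : 2*P ≤ N := by omega
      exact_mod_cast this
    nlinarith
  rw [abs_e_sub_one]
  apply Real.sqrt_le_sqrt
  have hc : Real.cos (2*Real.pi*(P:ℝ)/N) ≤ Real.cos (2*Real.pi*(p:ℝ)/N) := by
    rw [← Real.cos_abs (2*Real.pi*(p:ℝ)/N)]
    exact Real.cos_le_cos_of_nonneg_of_le_pi (abs_nonneg _) hyp hxy
  linarith

lemma s_lt_one (N P : ℕ) (hP : 1 ≤ P) (h6 : 6*(P+1) ≤ N) :
    Real.sqrt (2 - 2*Real.cos (2*Real.pi*(P:ℝ)/N)) < 1 := by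
  have hN0 : 0 < N := by omega
  have hNR : (0:ℝ) < N := by exact_mod_cast hN0
  have hpi := Real.pi_pos
  have hx : 2*Real.pi*(P:ℝ)/N < Real.pi/3 := by
    rw [div_lt_div_iff₀ hNR (by norm_num : (0:ℝ) < 3)]
    have h1 : (6*P : ℝ) < N := by
      have : 6*P < N := by omega
      exact_mod_cast this
    nlinarith
  have hc : Real.cos (Real.pi/3) < Real.cos (2*Real.pi*(P:ℝ)/N) :=
    Real.cos_lt_cos_of_nonneg_of_le_pi (by positivity) (by linarith) hx
  rw [Real.cos_pi_div_three] at hc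
  have h0 : 0 ≤ 2 - 2*Real.cos (2*Real.pi*(P:ℝ)/N) := by
    nlinarith [Real.cos_le_one (2*Real.pi*(P:ℝ)/N)]
  calc Real.sqrt (2 - 2*Real.cos (2*Real.pi*(P:ℝ)/N)) < Real.sqrt 1 :=
        Real.sqrt_lt_sqrt h0 (by linarith)
    _ = 1 := Real.sqrt_one

lemma E_abs (N P : ℕ) (a : ℤ → ℂ) (s : ℝ) (hs0 : 0 ≤ s)
    (hs : ∀ p ∈ Finset.Icc (-(P:ℤ)) (P:ℤ), ‖e N 1 p - 1‖ ≤ s) (K : ℕ) (m : ℤ) :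
    ‖E N P a K m‖ ≤ (∑ p ∈ Finset.Icc (-(P:ℤ)) (P:ℤ), ‖a p‖) * s^K := by
  unfold E
  refine le_trans (norm_sum_le _ _) ?_
  rw [Finset.sum_mul]
  refine Finset.sum_le_sum fun p hp => ?_
  rw [norm_mul, norm_mul, norm_pow, abs_e, mul_one]
  gcongr
  all_goals first
    | exact norm_nonneg _
    | exact hs p hp

end Stmt17Aux
end

/-- if N ≥ 6(P+1), the PBL samples are identifiable up to an integer
constant vector. -/
theorem stmt17 (P N : ℕ) (hP : 1 ≤ P) (hN : 2 * P + 1 < N) (h : 6 * (P + 1) ≤ N) :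
    PBLIdentifiable P N := by
  intro y y' hy hy' hint
  obtain ⟨c, -, hyc⟩ := hy
  obtain ⟨c', -, hyc'⟩ := hy'
  choose k hk using hint
  set a : ℤ → ℂ := fun p => c p - c' p with ha
  have hN0 : 0 < N := by omega
  have hPN : (P:ℤ) < N := by exact_mod_cast (by omega : P < N)
  open Stmt17Aux in
  have hD : ∀ n : Fin N, Stmt17Aux.D N P a ((n:ℕ):ℤ) = ((k n : ℤ) : ℂ) := by
    intro n
    have h3 : ((y n - y' n : ℝ) : ℂ) = Stmt17Aux.D N P a ((n:ℕ):ℤ) := by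
      push_cast
      rw [hyc n, hyc' n, ← Finset.sum_sub_distrib]
      unfold Stmt17Aux.D Stmt17Aux.e
      refine Finset.sum_congr rfl fun p _ => ?_
      push_cast
      ring
    rw [← h3, hk n]
    norm_cast
  have hDint : ∀ m : ℤ, ∃ z : ℤ, Stmt17Aux.D N P a m = (z:ℂ) := by
    intro m
    rw [Stmt17Aux.D_mod N P hN0 a m]
    have h0 : 0 ≤ m % (N:ℤ) := Int.emod_nonneg m (by exact_mod_cast hN0.ne')
    have h1 : m % (N:ℤ) < N := Int.emod_lt_of_pos m (by exact_mod_cast hN0)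
    have h2 : (((⟨(m % (N:ℤ)).toNat, by omega⟩ : Fin N) : ℕ) : ℤ) = m % (N:ℤ) := by
      simp; omega
    refine ⟨k ⟨(m % (N:ℤ)).toNat, by omega⟩, ?_⟩
    have h3 := hD ⟨(m % (N:ℤ)).toNat, by omega⟩
    convert h3 using 2
    exact h2.symm
  have hEint : ∀ K : ℕ, ∀ m : ℤ, ∃ z : ℤ, Stmt17Aux.E N P a K m = (z:ℂ) := by
    intro K
    induction K with
    | zero => intro m; rw [Stmt17Aux.E_zero]; exact hDint m
    | succ K ih =>
      intro m
      obtain ⟨z1, h1⟩ := ih (m+1)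
      obtain ⟨z2, h2⟩ := ih m
      exact ⟨z1 - z2, by rw [Stmt17Aux.E_succ, h1, h2]; push_cast; ring⟩
  set s := Real.sqrt (2 - 2*Real.cos (2*Real.pi*(P:ℝ)/N)) with hsdef
  have hs0 : 0 ≤ s := Real.sqrt_nonneg _
  have hs1 : s < 1 := Stmt17Aux.s_lt_one N P hP h
  set A := ∑ p ∈ Finset.Icc (-(P:ℤ)) (P:ℤ), ‖a p‖ with hA
  have hA0 : 0 ≤ A := Finset.sum_nonneg fun p _ => norm_nonneg _
  have hbound : ∀ K : ℕ, ∀ m : ℤ, ‖Stmt17Aux.E N P a K m‖ ≤ A * s^K :=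
    fun K m => Stmt17Aux.E_abs N P a s hs0
      (fun p hp => by
        rw [Finset.mem_Icc] at hp
        exact Stmt17Aux.abs_e_sub_one_le N P hP h p hp.1 hp.2) K m
  have hE1 : ∀ m : ℤ, Stmt17Aux.E N P a 1 m = 0 := by
    by_contra hcon
    push_neg at hcon
    obtain ⟨m0, hm0⟩ := hcon
    have hstep : ∀ K : ℕ, 1 ≤ K → ∃ m : ℤ, Stmt17Aux.E N P a K m ≠ 0 := by
      intro K
      induction K with
      | zero => omega
      | succ K ih =>
        intro _
        by_cases hK1 : 1 ≤ K
        · obtain ⟨m1, hm1⟩ := ih hK1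
          by_contra hall
          push_neg at hall
          have hconstfw : ∀ m : ℤ, Stmt17Aux.E N P a K (m+1) = Stmt17Aux.E N P a K m := by
            intro m
            have h5 : Stmt17Aux.E N P a K (m+1) - Stmt17Aux.E N P a K m = 0 :=
              (Stmt17Aux.E_succ N P a K m).symm.trans (hall m)
            exact sub_eq_zero.mp h5
          have hconst : ∀ m : ℤ, Stmt17Aux.E N P a K m = Stmt17Aux.E N P a K 0 := by
            intro m
            induction m using Int.induction_on with
            | zero => rfl
            | succ i ih2 => rw [hconstfw (i:ℤ)]; exact ih2
            | pred i ih2 =>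
              have h6 := hconstfw (-(i:ℤ) - 1)
              norm_num at h6
              rw [← h6]
              exact ih2
          have hsum := Stmt17Aux.E_sum N P hPN a K hK1
          have hsum2 : ∑ n ∈ Finset.range N, Stmt17Aux.E N P a K (n:ℤ)
              = (N:ℂ) * Stmt17Aux.E N P a K 0 := by
            have h9 : ∑ n ∈ Finset.range N, Stmt17Aux.E N P a K (n:ℤ)
                = ∑ _n ∈ Finset.range N, Stmt17Aux.E N P a K 0 :=
              Finset.sum_congr rfl fun n _ => hconst (n:ℤ)
            rw [h9, Finset.sum_const, Finset.card_range, nsmul_eq_mul]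
          rw [hsum2] at hsum
          have hNC : (N:ℂ) ≠ 0 := Nat.cast_ne_zero.mpr hN0.ne'
          have hE0 : Stmt17Aux.E N P a K 0 = 0 := by
            rcases mul_eq_zero.mp hsum with h7 | h7
            · exact absurd h7 hNC
            · exact h7
          exact hm1 ((hconst m1).trans hE0)
        · have hK0 : K = 0 := by omega
          subst hK0
          exact ⟨m0, hm0⟩
    obtain ⟨K0, hK0⟩ := exists_pow_lt_of_lt_one
      (show (0:ℝ) < 1/(A+1) by positivity) hs1
    obtain ⟨m2, hm2⟩ := hstep (K0+1) (by omega)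
    obtain ⟨z, hz⟩ := hEint (K0+1) m2
    have hb := hbound (K0+1) m2
    rw [hz] at hb hm2
    have h7 : s^(K0+1) ≤ s^K0 := pow_le_pow_of_le_one hs0 hs1.le (by omega)
    have h8 : A * s^(K0+1) < 1 := by
      have h9 : A * s^(K0+1) ≤ A * (1/(A+1)) := by
        apply mul_le_mul_of_nonneg_left _ hA0
        exact le_trans h7 hK0.le
      have h10 : A * (1/(A+1)) < 1 := by
        rw [mul_one_div, div_lt_one (by positivity)]
        linarith
      linarith
    have hz0 : z = 0 := by
      rw [Complex.norm_intCast] at hb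
      have h11 : |(z:ℝ)| < 1 := lt_of_le_of_lt hb h8
      have h12 : |z| < 1 := by exact_mod_cast h11
      exact Int.abs_lt_one_iff.mp h12
    rw [hz0] at hm2
    exact hm2 (by norm_num)
  have hDstep : ∀ m : ℤ, Stmt17Aux.D N P a (m+1) = Stmt17Aux.D N P a m := by
    intro m
    have h5 : Stmt17Aux.E N P a 0 (m+1) - Stmt17Aux.E N P a 0 m = 0 :=
      (Stmt17Aux.E_succ N P a 0 m).symm.trans (hE1 m)
    have h6 := sub_eq_zero.mp h5
    rwa [Stmt17Aux.E_zero, Stmt17Aux.E_zero] at h6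
  have hDconst : ∀ n : ℕ, Stmt17Aux.D N P a (n:ℤ) = Stmt17Aux.D N P a 0 := by
    intro n
    induction n with
    | zero => norm_num
    | succ n ih =>
      have h5 := hDstep (n:ℤ)
      have h6 : ((n+1:ℕ):ℤ) = (n:ℤ)+1 := by push_cast; ring
      rw [h6, h5]
      exact ih
  refine ⟨k ⟨0, hN0⟩, fun n => ?_⟩
  have h1 : ((k n : ℤ):ℂ) = ((k ⟨0, hN0⟩ : ℤ):ℂ) := by
    rw [← hD n, ← hD ⟨0, hN0⟩]
    have h2 := hDconst (n:ℕ)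
    simpa using h2
  have h2 : k n = k ⟨0, hN0⟩ := by exact_mod_cast h1
  rw [hk n, h2]
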